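/- There exists a universal constant c > 0 such that, in the lower-bound construction, for every valid choice of d and r and every i ∈ [d], the function f_i satisfies ε(f_i) ≥ c. -/

import Mathlib

/-- A function on the hypercube is monotone if it respects the coordinatewise order. -/
def MonotoneCube {d : ℕ} (g : (Fin d → Bool) → ℝ) : Prop :=
  ∀ x y : Fin d → Bool, (∀ i, x i ≤ y i) → g x ≤ g y

/-- Distance to monotonicity. -/
noncomputable def distMono (d : ℕ) (f : (Fin d → Bool) → ℝ) : ℝ :=
  ((sInf {n : ℕ | ∃ g : (Fin d → Bool) → ℝ, MonotoneCube g ∧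
      n = Nat.card {x : Fin d → Bool // f x ≠ g x}} : ℕ) : ℝ) / 2 ^ d

/-- The hard function `f_i` of the lower-bound construction, for `d = m²` odd,
`r ∣ 2m + 1` and `w = (2m+1)/r`. Here `wt = |x_{-i}|` (the weight of `x` with its `i`-th
coordinate removed), `lo = (d-1)/2 - √d`, `hi = (d-1)/2 + √d`, and in the middle range
the block index is `j = (wt - lo)/w + 1`, so that `(j-1)·w ≤ wt - lo < j·w`;
the value is `j + (1 - x_i)`. -/
noncomputable def lbF (d m r : ℕ) (i : Fin d) (x : Fin d → Bool) : ℝ :=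
  let wt : ℤ := ((Finset.univ.filter (fun j : Fin d => j ≠ i ∧ x j = true)).card : ℤ)
  let lo : ℤ := ((d : ℤ) - 1) / 2 - (m : ℤ)
  let hi : ℤ := ((d : ℤ) - 1) / 2 + (m : ℤ)
  let w : ℤ := (2 * (m : ℤ) + 1) / (r : ℤ)
  if hi < wt then (r : ℝ)
  else if wt < lo then 1
  else (((wt - lo) / w + 1 : ℤ) : ℝ) + (if x i = true then 0 else 1)


open Finset

section cube
variable {ι : Type*} [Fintype ι] [DecidableEq ι]
set_option linter.unusedSectionVars false

def cubeSgn (z : ι → Bool) (j : ι) : ℤ := if z j then 1 else -1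

def cubeW (z : ι → Bool) : ℕ := (univ.filter (fun j => z j = true)).card

lemma sum_cubeSgn (z : ι → Bool) :
    ∑ j, cubeSgn z j = 2 * (cubeW z : ℤ) - Fintype.card ι := by
  classical
  rw [← Finset.sum_filter_add_sum_filter_not univ (fun j => z j = true)]
  have h1 : ∑ j ∈ univ.filter (fun j => z j = true), cubeSgn z j = (cubeW z : ℤ) := by
    rw [Finset.sum_congr rfl (g := fun _ => (1:ℤ)) (fun j hj => by
      simp only [mem_filter] at hj; simp [cubeSgn, hj.2])]
    simp [cubeW]
  have h2 : ∑ j ∈ univ.filter (fun j => ¬ z j = true), cubeSgn z j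
      = -((univ.filter (fun j => ¬ z j = true)).card : ℤ) := by
    rw [Finset.sum_congr rfl (g := fun _ => (-1:ℤ)) (fun j hj => by
      simp only [mem_filter] at hj; simp [cubeSgn, hj.2])]
    simp
  have h3 : (univ.filter (fun j => z j = true)).card
      + (univ.filter (fun j => ¬ z j = true)).card = Fintype.card ι := by
    rw [Finset.card_filter_add_card_filter_not]; rfl
  rw [h1, h2]
  have h4 : ((univ.filter (fun j => z j = true)).card : ℤ)
      + ((univ.filter (fun j => ¬ z j = true)).card : ℤ) = (Fintype.card ι : ℤ) := by
    exact_mod_cast congrArg (Nat.cast (R := ℤ)) h3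
  simp only [cubeW]
  omega

def flipEquiv (j : ι) : (ι → Bool) ≃ (ι → Bool) where
  toFun z := Function.update z j (!(z j))
  invFun z := Function.update z j (!(z j))
  left_inv z := by
    funext k
    by_cases h : k = j <;> simp [Function.update, h]
  right_inv z := by
    funext k
    by_cases h : k = j <;> simp [Function.update, h]

lemma sum_sgn_mul {j k : ι} (h : j ≠ k) :
    ∑ z : ι → Bool, cubeSgn z j * cubeSgn z k = 0 := by
  have key : ∀ z : ι → Bool,
      cubeSgn (flipEquiv j z) j * cubeSgn (flipEquiv j z) k
        = -(cubeSgn z j * cubeSgn z k) := by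
    intro z
    have h1 : (flipEquiv j z) j = !(z j) := by simp [flipEquiv]
    have h2 : (flipEquiv j z) k = z k := by
      simp [flipEquiv, Function.update, h.symm]
    simp only [cubeSgn, h1, h2]
    cases z j <;> cases z k <;> norm_num
  have heq := Equiv.sum_comp (flipEquiv j)
    (fun z => cubeSgn z j * cubeSgn z k)
  simp only [key] at heq
  rw [Finset.sum_neg_distrib] at heq
  linarith

lemma sum_sq_sgn :
    ∑ z : ι → Bool, (2 * (cubeW z : ℤ) - Fintype.card ι)^2
      = (Fintype.card ι : ℤ) * 2^(Fintype.card ι) := by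
  classical
  have hexp : ∀ z : ι → Bool, (2 * (cubeW z : ℤ) - Fintype.card ι)^2
      = ∑ j, ∑ k, cubeSgn z j * cubeSgn z k := by
    intro z
    rw [← sum_cubeSgn z, sq, Finset.sum_mul_sum]
  simp only [hexp]
  rw [Finset.sum_comm]
  have hin : ∀ j : ι, ∑ z : ι → Bool, ∑ k, cubeSgn z j * cubeSgn z k
      = (2:ℤ)^(Fintype.card ι) := by
    intro j
    rw [Finset.sum_comm]
    have : ∀ k : ι, ∑ z : ι → Bool, cubeSgn z j * cubeSgn z k
        = if k = j then (2:ℤ)^(Fintype.card ι) else 0 := by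
      intro k
      by_cases hk : k = j
      · subst hk
        rw [Finset.sum_congr rfl (g := fun _ => (1:ℤ)) (fun z _ => by
          simp only [cubeSgn]; cases z k <;> norm_num)]
        simp [Finset.card_univ, Fintype.card_fun]
      · rw [if_neg hk]; exact sum_sgn_mul (fun he => hk he.symm)
    simp only [this]
    simp
  rw [Finset.sum_congr rfl (fun j _ => hin j)]
  simp [mul_comm]

end cube

section cube2
variable {ι : Type*} [Fintype ι] [DecidableEq ι]

lemma count_good (m : ℕ) (hm : 1 ≤ m) (hι : Fintype.card ι = m^2 - 1) :
    2^(Fintype.card ι) ≤ 2 * (univ.filter (fun z : ι → Bool =>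
      (2*(cubeW z : ℤ) - Fintype.card ι)^2 ≤ (2*(m:ℤ))^2)).card := by
  classical
  set n := Fintype.card ι with hn
  have hsplit : (univ.filter (fun z : ι → Bool =>
        (2*(cubeW z : ℤ) - n)^2 ≤ (2*(m:ℤ))^2)).card
      + (univ.filter (fun z : ι → Bool =>
        ¬ (2*(cubeW z : ℤ) - n)^2 ≤ (2*(m:ℤ))^2)).card = 2^n := by
    rw [Finset.card_filter_add_card_filter_not, Finset.card_univ]
    simp [hn, Fintype.card_fun]
  have hbig : ∀ z ∈ univ.filter (fun z : ι → Bool =>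
      ¬ (2*(cubeW z : ℤ) - n)^2 ≤ (2*(m:ℤ))^2),
      ((2*(m:ℤ)+1)^2 : ℤ) ≤ (2*(cubeW z : ℤ) - n)^2 := by
    intro z hz
    simp only [mem_filter, not_le] at hz
    set a : ℤ := 2*(cubeW z : ℤ) - n with ha
    have h1 : (2*(m:ℤ)) < |a| := by
      nlinarith [abs_nonneg a, sq_abs a, hz.2]
    have h2 : (2*(m:ℤ)+1) ≤ |a| := by omega
    nlinarith [sq_abs a]
  set Bn : ℕ := (univ.filter (fun z : ι → Bool =>
      ¬ (2*(cubeW z : ℤ) - n)^2 ≤ (2*(m:ℤ))^2)).card with hBn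
  have hsum : ((Bn:ℤ)) * (2*(m:ℤ)+1)^2 ≤ (n : ℤ) * 2^n := by
    calc ((Bn:ℤ)) * (2*(m:ℤ)+1)^2
        = ∑ _z ∈ univ.filter (fun z : ι → Bool =>
            ¬ (2*(cubeW z : ℤ) - n)^2 ≤ (2*(m:ℤ))^2), ((2*(m:ℤ)+1)^2) := by
          rw [Finset.sum_const, nsmul_eq_mul]
      _ ≤ ∑ z ∈ univ.filter (fun z : ι → Bool =>
            ¬ (2*(cubeW z : ℤ) - n)^2 ≤ (2*(m:ℤ))^2), (2*(cubeW z : ℤ) - n)^2 :=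
          Finset.sum_le_sum hbig
      _ ≤ ∑ z : ι → Bool, (2*(cubeW z : ℤ) - n)^2 := by
          apply Finset.sum_le_sum_of_subset_of_nonneg (Finset.filter_subset _ _)
          intro z _ _; positivity
      _ = (n : ℤ) * 2^n := sum_sq_sgn
  have hbc : (0:ℤ) ≤ ((Bn:ℤ)) := Nat.cast_nonneg _
  have h2n : (0:ℤ) ≤ (2:ℤ)^n := by positivity
  have hm2 : 1 ≤ m^2 := Nat.one_le_pow _ _ hm
  have hncast : (n : ℤ) = (m:ℤ)^2 - 1 := by
    rw [hι, Nat.cast_sub hm2]; push_cast; ring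
  have hbad : 2 * ((Bn:ℤ)) ≤ (2:ℤ)^n := by
    rw [hncast] at hsum
    rcases eq_or_lt_of_le hm with h1 | h2
    · have hn0 : n = 0 := by rw [← h1] at hι; simpa using hι
      rw [hn0] at h2n ⊢
      have hmz : (1:ℤ) ≤ (m:ℤ) := by exact_mod_cast hm
      have : ((m:ℤ)^2 - 1) * 2^n = ((m:ℤ)^2-1) * 2^n := rfl
      nlinarith [hsum, hbc, hmz, sq_nonneg (2*(m:ℤ)+1), pow_pos (show (0:ℤ) < 2 by norm_num) n]
    · have hm2' : (2:ℤ) ≤ (m:ℤ) := by exact_mod_cast h2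
      have h3 : (3:ℤ) ≤ (m:ℤ)^2 - 1 := by nlinarith
      nlinarith [hsum, hbc, h2n, h3,
        mul_nonneg hbc (show (0:ℤ) ≤ 2*(m:ℤ)^2 + 4*(m:ℤ) + 3 by positivity)]
  have hbadn : 2 * Bn ≤ 2^n := by exact_mod_cast hbad
  omega

end cube2

section main
open Finset
variable {d : ℕ} (i : Fin d)

/-- extend a point on the coordinates `≠ i` by putting `false` at `i`. -/
def extAt (i : Fin d) (z : {j : Fin d // j ≠ i} → Bool) : Fin d → Bool :=
  fun j => if h : j = i then false else z ⟨j, h⟩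

lemma extAt_apply_self (z : {j : Fin d // j ≠ i} → Bool) : extAt i z i = false := by
  simp [extAt]

lemma extAt_apply_ne (z : {j : Fin d // j ≠ i} → Bool) (j : {j : Fin d // j ≠ i}) :
    extAt i z j.1 = z j := by
  simp [extAt, j.2]

lemma extAt_injective : Function.Injective (extAt i) := by
  intro z z' h
  funext j
  have := congrFun h j.1
  rwa [extAt_apply_ne, extAt_apply_ne] at this

lemma card_ne_at : Fintype.card {j : Fin d // j ≠ i} = d - 1 := by
  rw [Fintype.card_subtype]
  rw [Finset.filter_ne']
  rw [Finset.card_erase_of_mem (mem_univ i), Finset.card_univ, Fintype.card_fin]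

lemma wt_extAt (z : {j : Fin d // j ≠ i} → Bool) :
    (univ.filter (fun j : Fin d => j ≠ i ∧ extAt i z j = true)).card = cubeW z := by
  unfold cubeW
  refine Finset.card_bij' (fun j hj => (⟨j, by simp only [mem_filter] at hj; exact hj.2.1⟩ :
      {j : Fin d // j ≠ i})) (fun j _ => j.1) ?_ ?_ ?_ ?_
  · intro j hj
    simp only [mem_filter] at hj ⊢
    refine ⟨mem_univ _, ?_⟩
    have := hj.2.2
    rwa [show extAt i z j = z ⟨j, hj.2.1⟩ from extAt_apply_ne i z ⟨j, hj.2.1⟩] at this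
  · intro j hj
    simp only [mem_filter] at hj ⊢
    exact ⟨mem_univ _, j.2, by rw [extAt_apply_ne]; exact hj.2⟩
  · intros; rfl
  · intros; rfl

lemma wt_update (x : Fin d → Bool) :
    (univ.filter (fun j : Fin d => j ≠ i ∧ Function.update x i true j = true)).card
      = (univ.filter (fun j : Fin d => j ≠ i ∧ x j = true)).card := by
  congr 1
  apply Finset.filter_congr
  intro j _
  constructor
  · rintro ⟨hj, h2⟩; exact ⟨hj, by rwa [Function.update_of_ne hj] at h2⟩
  · rintro ⟨hj, h2⟩; exact ⟨hj, by rwa [Function.update_of_ne hj]⟩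

lemma lbF_mid (m r : ℕ) (x : Fin d → Bool)
    (h1 : ¬ (((d:ℤ)-1)/2 + (m:ℤ)
        < ((univ.filter (fun j : Fin d => j ≠ i ∧ x j = true)).card : ℤ)))
    (h2 : ¬ (((univ.filter (fun j : Fin d => j ≠ i ∧ x j = true)).card : ℤ)
        < ((d:ℤ)-1)/2 - (m:ℤ))) :
    lbF d m r i x
      = (((((univ.filter (fun j : Fin d => j ≠ i ∧ x j = true)).card : ℤ)
          - (((d:ℤ)-1)/2 - (m:ℤ))) / ((2*(m:ℤ)+1)/(r:ℤ)) + 1 : ℤ) : ℝ)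
        + (if x i = true then (0:ℝ) else 1) := by
  simp only [lbF]
  rw [if_neg h1, if_neg h2]

lemma lbF_gap (m r : ℕ) (hd : d = m ^ 2) (hodd : Odd d)
    (z : {j : Fin d // j ≠ i} → Bool)
    (hz : (2 * (cubeW z : ℤ) - (Fintype.card {j : Fin d // j ≠ i} : ℤ))^2 ≤ (2*(m:ℤ))^2) :
    lbF d m r i (extAt i z)
      = lbF d m r i (Function.update (extAt i z) i true) + 1 := by
  obtain ⟨t, ht⟩ := hodd
  have hcard : Fintype.card {j : Fin d // j ≠ i} = d - 1 := card_ne_at i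
  have hd1 : 1 ≤ d := by omega
  have hWz : ((univ.filter (fun j : Fin d => j ≠ i ∧ extAt i z j = true)).card : ℤ)
      = (cubeW z : ℤ) := by exact_mod_cast congrArg (Nat.cast (R := ℤ)) (wt_extAt i z)
  have hcast : ((Fintype.card {j : Fin d // j ≠ i} : ℕ) : ℤ) = (d:ℤ) - 1 := by
    rw [hcard, Nat.cast_sub hd1]; norm_num
  have hrange : (2 * ((univ.filter (fun j : Fin d => j ≠ i ∧ extAt i z j = true)).card : ℤ)
      - ((d:ℤ) - 1))^2 ≤ (2*(m:ℤ))^2 := by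
    rw [hWz, ← hcast]; exact hz
  set W : ℤ := ((univ.filter (fun j : Fin d => j ≠ i ∧ extAt i z j = true)).card : ℤ) with hW
  have habs : |2 * W - ((d:ℤ) - 1)| ≤ 2*(m:ℤ) := by
    nlinarith [abs_nonneg (2 * W - ((d:ℤ) - 1)), sq_abs (2 * W - ((d:ℤ) - 1)), hrange]
  have hdt : (d : ℤ) = 2*(t:ℤ) + 1 := by exact_mod_cast congrArg (Nat.cast (R := ℤ)) ht
  rw [abs_le] at habs
  have hlo : ¬ (W < ((d:ℤ) - 1)/2 - (m:ℤ)) := by omega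
  have hhi : ¬ (((d:ℤ) - 1)/2 + (m:ℤ) < W) := by omega
  have hwty : ((univ.filter (fun j : Fin d =>
        j ≠ i ∧ Function.update (extAt i z) i true j = true)).card : ℤ) = W := by
    rw [hW]; exact_mod_cast congrArg (Nat.cast (R := ℤ)) (wt_update i (extAt i z))
  rw [lbF_mid i m r (extAt i z) hhi hlo,
      lbF_mid i m r (Function.update (extAt i z) i true)
        (by rw [hwty]; exact hhi) (by rw [hwty]; exact hlo)]
  rw [hwty, ← hW]
  rw [extAt_apply_self, Function.update_self]
  norm_num

theorem lb_count (m r : ℕ) (hd : d = m ^ 2) (hodd : Odd d)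
    {g : (Fin d → Bool) → ℝ} (hg : MonotoneCube g) :
    (univ.filter (fun z : {j : Fin d // j ≠ i} → Bool =>
        (2 * (cubeW z : ℤ) - (Fintype.card {j : Fin d // j ≠ i} : ℤ))^2
          ≤ (2*(m:ℤ))^2)).card
      ≤ (univ.filter (fun x : Fin d → Bool => lbF d m r i x ≠ g x)).card := by
  classical
  apply Finset.card_le_card_of_injOn
    (fun z => if lbF d m r i (extAt i z) ≠ g (extAt i z) then extAt i z
      else Function.update (extAt i z) i true)
  · intro z hz
    simp only [mem_coe, mem_filter] at hz ⊢
    refine ⟨mem_univ _, ?_⟩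
    by_cases hcase : lbF d m r i (extAt i z) ≠ g (extAt i z)
    · rw [if_pos hcase]; exact hcase
    · rw [if_neg hcase]
      push_neg at hcase
      intro hcon
      have hgap := lbF_gap i m r hd hodd z hz.2
      have hle : g (extAt i z) ≤ g (Function.update (extAt i z) i true) := by
        apply hg
        intro j
        by_cases hj : j = i
        · subst hj; rw [extAt_apply_self, Function.update_self]; exact Bool.false_le _
        · rw [Function.update_of_ne hj]
      rw [← hcase, ← hcon] at hle
      rw [hgap] at hle
      linarith
  · intro z₁ h₁ z₂ h₂ heq
    apply extAt_injective i
    have key : ∀ z : {j : Fin d // j ≠ i} → Bool,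
        Function.update ((fun z => if lbF d m r i (extAt i z) ≠ g (extAt i z) then extAt i z
          else Function.update (extAt i z) i true) z) i false = extAt i z := by
      intro z
      dsimp only
      by_cases hcase : lbF d m r i (extAt i z) ≠ g (extAt i z)
      · rw [if_pos hcase]
        funext j
        by_cases hj : j = i
        · subst hj; simp [extAt_apply_self]
        · simp [Function.update_of_ne hj]
      · rw [if_neg hcase]
        funext j
        by_cases hj : j = i
        · subst hj; simp [extAt_apply_self]
        · simp [Function.update_of_ne hj]
    rw [← key z₁, ← key z₂, heq]

end main

theorem lb_functions_far_from_monotone :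
    ∃ c : ℝ, 0 < c ∧ ∀ d m r : ℕ, d = m ^ 2 → Odd d → 2 ≤ r → r ∣ 2 * m + 1 →
      ∀ i : Fin d, distMono d (lbF d m r i) ≥ c := by
  classical
  refine ⟨1/4, by norm_num, ?_⟩
  intro d m r hd hodd hr2 hrd i
  have hm : 1 ≤ m := by
    rcases Nat.eq_zero_or_pos m with h | h
    · subst h; simp at hd; subst hd; simp at hodd
    · exact h
  have hd1 : 1 ≤ d := by
    subst hd; exact Nat.one_le_pow _ _ hm
  have hcard : Fintype.card {j : Fin d // j ≠ i} = d - 1 := card_ne_at i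
  have hcard' : Fintype.card {j : Fin d // j ≠ i} = m^2 - 1 := by rw [hcard, hd]
  set G : ℕ := (Finset.univ.filter (fun z : {j : Fin d // j ≠ i} → Bool =>
      (2 * (cubeW z : ℤ) - (Fintype.card {j : Fin d // j ≠ i} : ℤ))^2
        ≤ (2*(m:ℤ))^2)).card with hG
  have hGbig : 2^(d-1) ≤ 2 * G := by
    rw [← hcard]
    exact count_good m hm hcard'
  set T : Set ℕ := {n : ℕ | ∃ g : (Fin d → Bool) → ℝ, MonotoneCube g ∧
      n = Nat.card {x : Fin d → Bool // lbF d m r i x ≠ g x}} with hT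
  have hne : T.Nonempty := by
    refine ⟨_, (fun _ => (0:ℝ)), fun _ _ _ => le_refl 0, rfl⟩
  have hinf : G ≤ sInf T := by
    apply le_csInf hne
    intro b hb
    obtain ⟨g, hg, rfl⟩ := hb
    have hcc : Nat.card {x : Fin d → Bool // lbF d m r i x ≠ g x}
        = (Finset.univ.filter (fun x : Fin d → Bool => lbF d m r i x ≠ g x)).card := by
      rw [Nat.card_eq_fintype_card, Fintype.card_subtype]
    rw [hcc]
    exact lb_count i m r hd hodd hg
  rw [distMono, ge_iff_le]
  have h2d : (2:ℝ)^d = 2 * 2^(d-1) := by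
    rw [← pow_succ']
    congr 1
    omega
  have hGR : (2:ℝ)^(d-1) ≤ 2 * (G:ℝ) := by exact_mod_cast hGbig
  have hsR : (G : ℝ) ≤ ((sInf T : ℕ) : ℝ) := by exact_mod_cast hinf
  rw [div_le_div_iff₀ (by norm_num) (by positivity)]
  calc (1:ℝ) * 2^d = 2 * 2^(d-1) := by rw [h2d]; ring
    _ ≤ 2 * (2 * (G:ℝ)) := by linarith
    _ ≤ ((sInf T : ℕ) : ℝ) * 4 := by linarith
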